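/- The full inclusion i : Δ ↪ Pos is dense: for every partially ordered set P, the canonical cocone exhibits P as the colimit in Pos of the diagram (i ↓ P) → Δ → Pos, where i ↓ P is the comma category whose objects are monotone maps x : [n] → P (finite chains in P) and whose morphisms are monotone maps f : [n] → [m] with y ∘ f = x. -/

import Mathlib

open CategoryTheory Limits

/-- The full inclusion `i : Δ ↪ Pos` of the simplex category into the category of
partially ordered sets, sending `[n]` to the poset `{0, …, n}`. -/
def deltaToPartOrd : SimplexCategory ⥤ PartOrd where
  obj n := PartOrd.of (Fin (n.len + 1))
  map f := PartOrd.ofHom f.toOrderHom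

/-- For a poset `P`, the canonical cocone over the diagram `(i ↓ P) → Δ → Pos`, whose
apex is `P` and whose leg at an object `x : i[n] → P` of the comma category `i ↓ P` is
the map `x` itself. -/
def canonicalCocone (P : PartOrd) :
    Cocone (CostructuredArrow.proj deltaToPartOrd P ⋙ deltaToPartOrd) where
  pt := P
  ι :=
    { app := fun x => x.hom
      naturality := fun x y f => by exact (CostructuredArrow.w f).trans (Category.comp_id _).symm }

section DeltaDenseAux

variable {P : PartOrd}

/-- The object of `i ↓ P` given by a point of `P`. -/
def pointObj (P : PartOrd) (p : P) : CostructuredArrow deltaToPartOrd P :=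
  CostructuredArrow.mk (Y := SimplexCategory.mk 0)
    (show PartOrd.of (Fin 1) ⟶ P from PartOrd.ofHom (OrderHom.const _ p))

/-- The leg of a cocone at object `x`, as an order hom. -/
def leg (s : Cocone (CostructuredArrow.proj deltaToPartOrd P ⋙ deltaToPartOrd))
    (x : CostructuredArrow deltaToPartOrd P) : Fin (x.left.len + 1) →o s.pt :=
  show Fin (x.left.len + 1) →o s.pt from (s.ι.app x).hom

def descFun (s : Cocone (CostructuredArrow.proj deltaToPartOrd P ⋙ deltaToPartOrd)) :
    P → s.pt := fun p => leg s (pointObj P p) 0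

lemma key (s : Cocone (CostructuredArrow.proj deltaToPartOrd P ⋙ deltaToPartOrd))
    (x : CostructuredArrow deltaToPartOrd P) (i : Fin (x.left.len + 1)) :
    descFun s ((show Fin (x.left.len + 1) →o P from x.hom.hom) i) = leg s x i := by
  let g : SimplexCategory.mk 0 ⟶ x.left := SimplexCategory.Hom.mk (OrderHom.const _ i)
  have w : deltaToPartOrd.map g ≫ x.hom =
      (pointObj P ((show Fin (x.left.len + 1) →o P from x.hom.hom) i)).hom := rfl
  let f : pointObj P ((show Fin (x.left.len + 1) →o P from x.hom.hom) i) ⟶ x :=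
    CostructuredArrow.homMk g w
  have h := s.w f
  have := congrArg (fun k => (show Fin 1 →o s.pt from k.hom) 0) h
  exact this.symm

lemma descFun_mono (s : Cocone (CostructuredArrow.proj deltaToPartOrd P ⋙ deltaToPartOrd)) :
    Monotone (descFun s) := by
  intro p q hpq
  set x2 : Fin 2 →o P := ⟨fun i => if i = 0 then p else q, by
    intro a b hab
    fin_cases a <;> fin_cases b <;> simp_all⟩ with hx2
  let o : CostructuredArrow deltaToPartOrd P :=
    CostructuredArrow.mk (Y := SimplexCategory.mk 1)
      (show PartOrd.of (Fin 2) ⟶ P from PartOrd.ofHom x2)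
  have h0 : descFun s p = leg s o 0 := by
    have := key s o 0
    exact this
  have h1 : descFun s q = leg s o 1 := by
    have := key s o 1
    exact this
  rw [h0, h1]
  exact (leg s o).monotone (show (0 : Fin 2) ≤ 1 by decide)

end DeltaDenseAux

/-- The full inclusion `i : Δ ↪ Pos` is dense: for every partially
ordered set `P`, the canonical cocone exhibits `P` as the colimit in `Pos` of the
diagram `(i ↓ P) → Δ → Pos`, where `i ↓ P` is the comma category whose objects are
monotone maps `x : [n] → P` (finite chains in `P`) and whose morphisms are monotone
maps `f : [n] → [m]` with `y ∘ f = x`. -/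
theorem deltaToPartOrd_dense (P : PartOrd) :
    Nonempty (IsColimit (canonicalCocone P)) := by
  constructor
  refine { desc := fun s => show P ⟶ s.pt from PartOrd.ofHom ⟨descFun s, descFun_mono s⟩
           fac := ?_, uniq := ?_ }
  · intro s x
    apply PartOrd.hom_ext
    apply OrderHom.ext
    funext i
    exact key s x i
  · intro s m hm
    apply PartOrd.hom_ext
    apply OrderHom.ext
    funext p
    have := congrArg (fun k => (show Fin 1 →o s.pt from k.hom) 0) (hm (pointObj P p))
    exact this
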